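/- Let $\Delta_1,\Delta_2,\ldots$ be IID zero-mean random variables with finite variance, and let $\alpha = \alpha_c \alpha_d \in (0,1)$ with $\alpha_c,\alpha_d \in (0,1)$. Define the storage sequence $S_{i+1} = \max\{S_i + \alpha_c \Delta_i^+ - \Delta_i^- /\alpha_d, 0\}$ with $S_1 \ge 0$, and the generation $G_i = \Delta_i^- - \alpha\Delta_i^+ + \alpha_d(S_{i+1} - S_i)$ where $x^+ = \max\{x,0\}$ and $x^- = \max\{-x,0\}$. Then $\lim_{n\to\infty} \mathbb{E}[\frac{1}{n}\sum_{i=1}^n G_i] = (1-\alpha)\,\mathbb{E}[\Delta_1^-]$. -/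

import Mathlib

open MeasureTheory ProbabilityTheory Filter Topology

/-- With unlimited generation and storage, the greedy policy achieves expected
average generation `(1 - α) E[Δ⁻]` for IID zero-mean prediction errors. -/
theorem stmt4 {Ω : Type*} [MeasureSpace Ω] [IsProbabilityMeasure (ℙ : Measure Ω)]
    (Δ : ℕ → Ω → ℝ) (S G : ℕ → Ω → ℝ) (αc αd s₁ : ℝ)
    (hαc : αc ∈ Set.Ioo (0 : ℝ) 1) (hαd : αd ∈ Set.Ioo (0 : ℝ) 1)
    (hmeas : ∀ i, Measurable (Δ i))
    (hindep : iIndepFun Δ ℙ)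
    (hident : ∀ i j, IdentDistrib (Δ i) (Δ j) ℙ ℙ)
    (hL2 : ∀ i, MemLp (Δ i) 2 ℙ)
    (hmean : ∀ i, ∫ ω, Δ i ω ∂ℙ = 0)
    (hS1 : ∀ ω, S 1 ω = s₁) (hs₁ : 0 ≤ s₁)
    (hSdyn : ∀ i ≥ 1, ∀ ω,
      S (i + 1) ω = max (S i ω + αc * max (Δ i ω) 0 - max (-(Δ i ω)) 0 / αd) 0)
    (hG : ∀ i ≥ 1, ∀ ω,
      G i ω = max (-(Δ i ω)) 0 - (αc * αd) * max (Δ i ω) 0 + αd * (S (i + 1) ω - S i ω)) :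
    Tendsto (fun n : ℕ => ∫ ω, (1 / (n : ℝ)) * ∑ i ∈ Finset.Icc 1 n, G i ω ∂ℙ)
      atTop (𝓝 ((1 - αc * αd) * ∫ ω, max (-(Δ 1 ω)) 0 ∂ℙ)) := by
  obtain ⟨hαc0, hαc1⟩ := hαc
  obtain ⟨hαd0, hαd1⟩ := hαd
  set m : ℝ := ∫ ω, max (-(Δ 1 ω)) 0 ∂ℙ with hmdef
  have habs_max : ∀ a : ℝ, |max a 0| ≤ |a| := by
    intro a
    rw [abs_of_nonneg (le_max_right a 0)]
    exact max_le (le_abs_self a) (abs_nonneg a)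
  -- positive and negative parts
  set Pp : ℕ → Ω → ℝ := fun i ω => max (Δ i ω) 0 with hPpdef
  set Np : ℕ → Ω → ℝ := fun i ω => max (-(Δ i ω)) 0 with hNpdef
  have hPpmeas : ∀ i, Measurable (Pp i) := fun i => (hmeas i).max measurable_const
  have hNpmeas : ∀ i, Measurable (Np i) := fun i => (hmeas i).neg.max measurable_const
  have hPpL2 : ∀ i, MemLp (Pp i) 2 ℙ := by
    intro i
    refine MemLp.of_le (hL2 i) (hPpmeas i).aestronglyMeasurable ?_
    exact Filter.Eventually.of_forall fun ω => habs_max (Δ i ω)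
  have hNpL2 : ∀ i, MemLp (Np i) 2 ℙ := by
    intro i
    refine MemLp.of_le (hL2 i) (hNpmeas i).aestronglyMeasurable ?_
    refine Filter.Eventually.of_forall fun ω => ?_
    simpa [abs_neg] using habs_max (-(Δ i ω))
  have hPpint : ∀ i, Integrable (Pp i) ℙ := fun i => (hPpL2 i).integrable one_le_two
  have hNpint : ∀ i, Integrable (Np i) ℙ := fun i => (hNpL2 i).integrable one_le_two
  have hNm : ∀ i, ∫ ω, Np i ω ∂ℙ = m := by
    intro i
    exact ((hident i 1).comp (measurable_neg.max measurable_const)).integral_eq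
  have hPm1 : ∫ ω, Pp 1 ω ∂ℙ = m := by
    have hpt : ∀ ω, Δ 1 ω = Pp 1 ω - Np 1 ω := by
      intro ω
      simp only [hPpdef, hNpdef]
      rcases le_total (Δ 1 ω) 0 with h | h
      · rw [max_eq_right h, max_eq_left (by linarith)]; ring
      · rw [max_eq_left h, max_eq_right (by linarith)]; ring
    have h0 := hmean 1
    rw [integral_congr_ae (Filter.Eventually.of_forall hpt),
      integral_sub (hPpint 1) (hNpint 1)] at h0
    have := hNm 1
    linarith
  have hPm : ∀ i, ∫ ω, Pp i ω ∂ℙ = m := by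
    intro i
    rw [← hPm1]
    exact ((hident i 1).comp (measurable_id.max measurable_const)).integral_eq
  have hm0 : 0 ≤ m := by
    rw [hmdef]
    exact integral_nonneg fun ω => le_max_right _ _
  -- the increment process X
  set φ : ℝ → ℝ := fun x => αc * max x 0 - max (-x) 0 / αd with hφdef
  have hφc : Continuous φ := by
    apply Continuous.sub
    · exact continuous_const.mul (continuous_id.max continuous_const)
    · exact (continuous_neg.max continuous_const).div_const αd
  set X : ℕ → Ω → ℝ := fun i ω => φ (Δ i ω) with hXdef
  have hXmeas : ∀ i, Measurable (X i) := fun i => hφc.measurable.comp (hmeas i)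
  have hXL2 : ∀ i, MemLp (X i) 2 ℙ := by
    intro i
    refine MemLp.of_le ((hL2 i).const_mul (αc + 1/αd)) (hXmeas i).aestronglyMeasurable ?_
    refine Filter.Eventually.of_forall fun ω => ?_
    have h1 := habs_max (Δ i ω)
    have h2 : |max (-(Δ i ω)) 0| ≤ |Δ i ω| := by
      simpa [abs_neg] using habs_max (-(Δ i ω))
    have hp0 : 0 ≤ max (Δ i ω) 0 := le_max_right _ _
    have hn0 : 0 ≤ max (-(Δ i ω)) 0 := le_max_right _ _
    rw [abs_of_nonneg hp0] at h1
    rw [abs_of_nonneg hn0] at h2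
    simp only [Real.norm_eq_abs, hXdef, hφdef]
    have hc : (0:ℝ) < 1/αd := by positivity
    calc |αc * max (Δ i ω) 0 - max (-(Δ i ω)) 0 / αd|
        ≤ |αc * max (Δ i ω) 0| + |max (-(Δ i ω)) 0 / αd| := abs_sub _ _
      _ = αc * max (Δ i ω) 0 + (1/αd) * max (-(Δ i ω)) 0 := by
          rw [abs_of_nonneg (mul_nonneg hαc0.le hp0), abs_of_nonneg (div_nonneg hn0 hαd0.le)]
          ring
      _ ≤ αc * |Δ i ω| + (1/αd) * |Δ i ω| := by
          have ha := mul_le_mul_of_nonneg_left h1 hαc0.le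
          have hb := mul_le_mul_of_nonneg_left h2 hc.le
          linarith
      _ = |(αc + 1/αd) * Δ i ω| := by
          have hpos : (0:ℝ) < αc + 1/αd := by
            have := one_div_pos.mpr hαd0
            linarith
          rw [abs_mul, abs_of_pos hpos]
          ring
  have hXint : ∀ i, Integrable (X i) ℙ := fun i => (hXL2 i).integrable one_le_two
  have hXmean : ∀ i, ∫ ω, X i ω ∂ℙ = αc * m - m / αd := by
    intro i
    have h1 : ∫ ω, X i ω ∂ℙ = ∫ ω, X 1 ω ∂ℙ :=
      ((hident i 1).comp hφc.measurable).integral_eq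
    rw [h1]
    have h2 : X 1 = fun ω => αc * Pp 1 ω - Np 1 ω / αd := rfl
    rw [h2, integral_sub ((hPpint 1).const_mul αc) ((hNpint 1).div_const αd),
      integral_const_mul, integral_div, hPm1, hNm 1]
  have hμ : αc * m - m / αd ≤ 0 := by
    have h1 : αc * m ≤ m := by nlinarith
    have h2 : m ≤ m / αd := by
      rw [le_div_iff₀ hαd0]; nlinarith
    linarith
  set C : ℝ := ∫ ω, (X 1 ω)^2 ∂ℙ with hCdef
  have hC0 : 0 ≤ C := integral_nonneg fun ω => sq_nonneg _
  have hXsq : ∀ i, ∫ ω, (X i ω)^2 ∂ℙ = C := by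
    intro i
    exact ((hident i 1).comp ((hφc.pow 2).measurable)).integral_eq
  -- σ-algebras
  set mΔ : ℕ → MeasurableSpace Ω := fun i => MeasurableSpace.comap (Δ i) inferInstance
    with hmΔdef
  have hle : ∀ i, mΔ i ≤ (by infer_instance : MeasurableSpace Ω) := fun i =>
    measurable_iff_comap_le.mp (hmeas i)
  have hiI : iIndep mΔ ℙ := hindep
  have hMS : ∀ n, 1 ≤ n → Measurable[⨆ i ∈ Set.Iio n, mΔ i] (S n) := by
    intro n hn
    induction n, hn using Nat.le_induction with
    | base =>
      have h : S 1 = fun _ => s₁ := funext hS1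
      rw [h]; exact measurable_const
    | succ n hn ih =>
      have hmono : (⨆ i ∈ Set.Iio n, mΔ i) ≤ ⨆ i ∈ Set.Iio (n+1), mΔ i := by
        refine iSup₂_le fun i hi => ?_
        exact le_iSup₂ (f := fun i (_ : i ∈ Set.Iio (n+1)) => mΔ i) i
          (Set.mem_Iio.mpr (lt_of_lt_of_le hi (Nat.le_succ n)))
      have hSn : Measurable[⨆ i ∈ Set.Iio (n+1), mΔ i] (S n) := ih.mono hmono le_rfl
      have hΔn : Measurable[⨆ i ∈ Set.Iio (n+1), mΔ i] (Δ n) := by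
        have h1 : Measurable[mΔ n] (Δ n) := measurable_iff_comap_le.mpr le_rfl
        exact h1.mono (le_iSup₂ (f := fun i (_ : i ∈ Set.Iio (n+1)) => mΔ i) n
          (Set.mem_Iio.mpr (Nat.lt_succ_self n))) le_rfl
      have h : S (n+1) = fun ω =>
          max (S n ω + αc * max (Δ n ω) 0 - max (-(Δ n ω)) 0 / αd) 0 :=
        funext (hSdyn n hn)
      rw [h]
      exact ((hSn.add ((hΔn.max measurable_const).const_mul αc)).sub
        ((hΔn.neg.max measurable_const).div_const αd)).max measurable_const
  have hSmeas : ∀ n, 1 ≤ n → Measurable (S n) := by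
    intro n hn
    exact (hMS n hn).mono (iSup₂_le fun i _ => hle i) le_rfl
  -- independence of S n and X n
  have hindepSX : ∀ n, 1 ≤ n → IndepFun (S n) (X n) ℙ := by
    intro n hn
    have hdisj : Disjoint (Set.Iio n) ({n} : Set ℕ) := by
      simp [Set.disjoint_singleton_right]
    have h1 : Indep (⨆ i ∈ Set.Iio n, mΔ i) (⨆ i ∈ ({n} : Set ℕ), mΔ i) ℙ :=
      indep_iSup_of_disjoint hle hiI hdisj
    have h2 : Indep (⨆ i ∈ Set.Iio n, mΔ i) (mΔ n) ℙ := by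
      simpa using h1
    have hXn : Measurable[mΔ n] (X n) := by
      have hΔ : Measurable[mΔ n] (Δ n) := measurable_iff_comap_le.mpr le_rfl
      exact hφc.measurable.comp hΔ
    have h3 : Indep (MeasurableSpace.comap (S n) inferInstance)
        (MeasurableSpace.comap (X n) inferInstance) ℙ :=
      indep_of_indep_of_le_left (indep_of_indep_of_le_right h2
        (measurable_iff_comap_le.mp hXn)) (measurable_iff_comap_le.mp (hMS n hn))
    exact h3
  -- S dynamics in terms of X
  have hS' : ∀ i, 1 ≤ i → ∀ ω, S (i+1) ω = max (S i ω + X i ω) 0 := by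
    intro i hi ω
    rw [hSdyn i hi ω]
    congr 1
    simp only [hXdef, hφdef]
    ring
  have hSpos : ∀ n, 1 ≤ n → ∀ ω, 0 ≤ S n ω := by
    intro n hn
    induction n, hn using Nat.le_induction with
    | base => intro ω; rw [hS1 ω]; exact hs₁
    | succ n hn ih => intro ω; rw [hS' n hn ω]; exact le_max_right _ _
  have hSL2 : ∀ n, 1 ≤ n → MemLp (S n) 2 ℙ := by
    intro n hn
    induction n, hn using Nat.le_induction with
    | base =>
      have h : S 1 = fun _ => s₁ := funext hS1
      rw [h]; exact memLp_const s₁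
    | succ n hn ih =>
      refine MemLp.of_le (ih.add (hXL2 n)) (hSmeas (n+1) (by omega)).aestronglyMeasurable ?_
      refine Filter.Eventually.of_forall fun ω => ?_
      rw [hS' n hn ω]
      simpa using habs_max (S n ω + X n ω)
  have hSint : ∀ n, 1 ≤ n → Integrable (S n) ℙ := fun n hn =>
    (hSL2 n hn).integrable one_le_two
  have hESpos : ∀ n, 1 ≤ n → 0 ≤ ∫ ω, S n ω ∂ℙ := fun n hn =>
    integral_nonneg (hSpos n hn)
  -- second moment bound
  have hsq : ∀ n, 1 ≤ n → ∫ ω, (S n ω)^2 ∂ℙ ≤ s₁^2 + ((n : ℝ) - 1) * C := by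
    intro n hn
    induction n, hn using Nat.le_induction with
    | base =>
      have h : (fun ω => (S 1 ω)^2) = fun _ => s₁^2 := by
        funext ω; rw [hS1 ω]
      rw [h]
      simp
    | succ n hn ih =>
      have hint_mul : Integrable (S n * X n) ℙ :=
        (hindepSX n hn).integrable_mul (hSint n hn) (hXint n)
      have hint_mul' : Integrable (fun ω => S n ω * X n ω) ℙ := hint_mul
      have hint_Ssq : Integrable (fun ω => (S n ω)^2) ℙ := (hSL2 n hn).integrable_sq
      have hint_Xsq : Integrable (fun ω => (X n ω)^2) ℙ := (hXL2 n).integrable_sq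
      have hint_sum_sq : Integrable (fun ω => (S n ω + X n ω)^2) ℙ :=
        ((hSL2 n hn).add (hXL2 n)).integrable_sq
      have h1 : ∫ ω, (S (n+1) ω)^2 ∂ℙ ≤ ∫ ω, (S n ω + X n ω)^2 ∂ℙ := by
        refine integral_mono (hSL2 (n+1) (by omega)).integrable_sq hint_sum_sq fun ω => ?_
        rw [hS' n hn ω]
        rcases le_total (S n ω + X n ω) 0 with h | h
        · rw [max_eq_right h]
          simpa using sq_nonneg (S n ω + X n ω)
        · rw [max_eq_left h]
      have h2 : ∫ ω, (S n ω + X n ω)^2 ∂ℙ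
          = ∫ ω, (S n ω)^2 ∂ℙ + 2 * ∫ ω, S n ω * X n ω ∂ℙ + ∫ ω, (X n ω)^2 ∂ℙ := by
        have hpt : (fun ω => (S n ω + X n ω)^2)
            = fun ω => ((S n ω)^2 + 2 * (S n ω * X n ω)) + (X n ω)^2 := by
          funext ω; ring
        have hA : Integrable (fun ω => (S n ω)^2 + 2 * (S n ω * X n ω)) ℙ :=
          hint_Ssq.add (hint_mul'.const_mul 2)
        have hB : Integrable (fun ω => 2 * (S n ω * X n ω)) ℙ := hint_mul'.const_mul 2
        rw [hpt, integral_add hA hint_Xsq, integral_add hint_Ssq hB, integral_const_mul]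
      have h3 : ∫ ω, S n ω * X n ω ∂ℙ ≤ 0 := by
        have heq : ∫ ω, S n ω * X n ω ∂ℙ = (∫ ω, S n ω ∂ℙ) * ∫ ω, X n ω ∂ℙ :=
          (hindepSX n hn).integral_mul_eq_mul_integral (hSint n hn).aestronglyMeasurable
            (hXint n).aestronglyMeasurable
        rw [heq, hXmean n]
        exact mul_nonpos_of_nonneg_of_nonpos (hESpos n hn) hμ
      have h4 := hXsq n
      push_cast
      calc ∫ ω, (S (n+1) ω)^2 ∂ℙ ≤ ∫ ω, (S n ω + X n ω)^2 ∂ℙ := h1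
        _ = ∫ ω, (S n ω)^2 ∂ℙ + 2 * ∫ ω, S n ω * X n ω ∂ℙ + ∫ ω, (X n ω)^2 ∂ℙ := h2
        _ ≤ (s₁^2 + ((n:ℝ) - 1) * C) + 2 * 0 + C := by
            rw [h4]
            have hih := ih
            linarith
        _ = s₁^2 + ((n:ℝ) + 1 - 1) * C := by ring
  -- first moment bound
  have hES_bound : ∀ n, 1 ≤ n → ∫ ω, S n ω ∂ℙ ≤ Real.sqrt (s₁^2 + ((n:ℝ) - 1) * C) := by
    intro n hn
    have hvar := variance_nonneg (S n) ℙ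
    rw [variance_eq_sub (hSL2 n hn)] at hvar
    simp only [Pi.pow_apply] at hvar
    have h5 : (∫ ω, S n ω ∂ℙ)^2 ≤ s₁^2 + ((n:ℝ) - 1) * C := by
      have := hsq n hn
      linarith
    calc ∫ ω, S n ω ∂ℙ = Real.sqrt ((∫ ω, S n ω ∂ℙ)^2) :=
          (Real.sqrt_sq (hESpos n hn)).symm
      _ ≤ Real.sqrt (s₁^2 + ((n:ℝ) - 1) * C) := Real.sqrt_le_sqrt h5
  -- telescoping identity
  have hsum : ∀ n : ℕ, ∀ ω, ∑ i ∈ Finset.Icc 1 n, G i ω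
      = ∑ i ∈ Finset.Icc 1 n, (Np i ω - (αc * αd) * Pp i ω) + αd * (S (n+1) ω - s₁) := by
    intro n
    induction n with
    | zero => intro ω; simp [hS1 ω]
    | succ n ih =>
      intro ω
      rw [Finset.sum_Icc_succ_top (by omega : 1 ≤ n + 1),
        Finset.sum_Icc_succ_top (by omega : 1 ≤ n + 1), ih ω, hG (n+1) (by omega) ω]
      simp only [hNpdef, hPpdef]
      ring
  -- integral identity for n ≥ 1
  have key : ∀ n : ℕ, 1 ≤ n → (∫ ω, (1 / (n : ℝ)) * ∑ i ∈ Finset.Icc 1 n, G i ω ∂ℙ)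
      = (1 - αc * αd) * m + αd * ((∫ ω, S (n+1) ω ∂ℙ) - s₁) / n := by
    intro n hn
    have hn0 : (n : ℝ) ≠ 0 := Nat.cast_ne_zero.mpr (by omega)
    have hpt : (fun ω => (1 / (n : ℝ)) * ∑ i ∈ Finset.Icc 1 n, G i ω)
        = fun ω => (1 / (n : ℝ)) *
          (∑ i ∈ Finset.Icc 1 n, (Np i ω - (αc * αd) * Pp i ω) + αd * (S (n+1) ω - s₁)) := by
      funext ω; rw [hsum n ω]
    rw [hpt, integral_const_mul]
    have hintsum : Integrable (fun ω => ∑ i ∈ Finset.Icc 1 n, (Np i ω - (αc * αd) * Pp i ω)) ℙ :=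
      integrable_finset_sum _ fun i _ => (hNpint i).sub ((hPpint i).const_mul _)
    have hintS : Integrable (fun ω => S (n+1) ω - s₁) ℙ :=
      (hSint (n+1) (by omega)).sub (integrable_const s₁)
    rw [integral_add hintsum (hintS.const_mul αd)]
    have hsumval : ∫ ω, ∑ i ∈ Finset.Icc 1 n, (Np i ω - (αc * αd) * Pp i ω) ∂ℙ
        = (n : ℝ) * ((1 - αc * αd) * m) := by
      rw [integral_finset_sum (f := fun i ω => Np i ω - (αc * αd) * Pp i ω) _
        fun i _ => (hNpint i).sub ((hPpint i).const_mul _)]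
      have hterm : ∀ i ∈ Finset.Icc 1 n, ∫ ω, (Np i ω - (αc * αd) * Pp i ω) ∂ℙ
          = (1 - αc * αd) * m := by
        intro i _
        rw [integral_sub (hNpint i) ((hPpint i).const_mul _), integral_const_mul, hNm i, hPm i]
        ring
      rw [Finset.sum_congr rfl hterm, Finset.sum_const, Nat.card_Icc]
      simp [nsmul_eq_mul]
    have hlast : ∫ ω, αd * (S (n+1) ω - s₁) ∂ℙ
        = αd * ((∫ ω, S (n+1) ω ∂ℙ) - s₁) := by
      rw [integral_const_mul, integral_sub (hSint (n+1) (by omega)) (integrable_const s₁)]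
      simp
    rw [hsumval, hlast]
    field_simp
  -- limits
  have hsqrt_top : Tendsto (fun n : ℕ => Real.sqrt n) atTop atTop := by
    rw [tendsto_atTop_atTop]
    intro b
    refine ⟨⌈b^2⌉₊, fun n hn => ?_⟩
    have h1 : (b^2 : ℝ) ≤ n := (Nat.le_ceil _).trans (by exact_mod_cast hn)
    calc b ≤ |b| := le_abs_self b
      _ = Real.sqrt (b^2) := (Real.sqrt_sq_eq_abs b).symm
      _ ≤ Real.sqrt n := Real.sqrt_le_sqrt h1
  have hinvsqrt : Tendsto (fun n : ℕ => 1 / Real.sqrt n) atTop (𝓝 0) := by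
    simpa [one_div, Function.comp_def] using tendsto_inv_atTop_zero.comp hsqrt_top
  have hsqrtdiv : Tendsto (fun n : ℕ => Real.sqrt n / n) atTop (𝓝 0) := by
    refine hinvsqrt.congr' ?_
    filter_upwards [eventually_ge_atTop 1] with n hn
    have hn0 : (0:ℝ) < n := by exact_mod_cast hn
    have hs : Real.sqrt n ≠ 0 := ne_of_gt (Real.sqrt_pos.mpr hn0)
    field_simp
    exact (Real.sq_sqrt hn0.le).symm
  have hhi : Tendsto (fun n : ℕ => αd * (s₁ + Real.sqrt n * Real.sqrt C) / n)
      atTop (𝓝 0) := by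
    have heq : (fun n : ℕ => αd * (s₁ + Real.sqrt n * Real.sqrt C) / n)
        = fun n : ℕ => (αd * s₁) / n + (αd * Real.sqrt C) * (Real.sqrt n / n) := by
      funext n; ring
    rw [heq]
    have h1 := tendsto_const_div_atTop_nhds_zero_nat (αd * s₁)
    have h2 := hsqrtdiv.const_mul (αd * Real.sqrt C)
    simpa using h1.add h2
  have hlo : Tendsto (fun n : ℕ => (-(αd * s₁)) / n) atTop (𝓝 0) :=
    tendsto_const_div_atTop_nhds_zero_nat _
  have hmid : Tendsto (fun n : ℕ => αd * ((∫ ω, S (n+1) ω ∂ℙ) - s₁) / n) atTop (𝓝 0) := by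
    refine tendsto_of_tendsto_of_tendsto_of_le_of_le' hlo hhi ?_ ?_
    · filter_upwards [eventually_ge_atTop 1] with n hn
      have hn0 : (0:ℝ) < n := by exact_mod_cast hn
      have hE := hESpos (n+1) (by omega)
      refine (div_le_div_iff_of_pos_right hn0).mpr ?_
      nlinarith
    · filter_upwards [eventually_ge_atTop 1] with n hn
      have hn0 : (0:ℝ) < n := by exact_mod_cast hn
      have hb := hES_bound (n+1) (by omega)
      have hcast : ((n+1:ℕ):ℝ) - 1 = (n:ℝ) := by push_cast; ring
      rw [hcast] at hb
      have hsplit : Real.sqrt (s₁^2 + (n:ℝ) * C) ≤ s₁ + Real.sqrt n * Real.sqrt C := by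
        have hnC : Real.sqrt ((n:ℝ) * C) = Real.sqrt n * Real.sqrt C :=
          Real.sqrt_mul (by positivity) C
        have hadd : Real.sqrt (s₁^2 + (n:ℝ) * C)
            ≤ Real.sqrt (s₁^2) + Real.sqrt ((n:ℝ) * C) := by
          have h1 : (0:ℝ) ≤ s₁^2 := sq_nonneg _
          have h2 : (0:ℝ) ≤ (n:ℝ) * C := by positivity
          have h3 : s₁^2 + (n:ℝ) * C
              ≤ (Real.sqrt (s₁^2) + Real.sqrt ((n:ℝ) * C))^2 := by
            have e1 := Real.sq_sqrt h1
            have e2 := Real.sq_sqrt h2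
            have e3 := Real.sqrt_nonneg (s₁^2)
            have e4 := Real.sqrt_nonneg ((n:ℝ) * C)
            nlinarith
          calc Real.sqrt (s₁^2 + (n:ℝ) * C)
              ≤ Real.sqrt ((Real.sqrt (s₁^2) + Real.sqrt ((n:ℝ) * C))^2) :=
                Real.sqrt_le_sqrt h3
            _ = Real.sqrt (s₁^2) + Real.sqrt ((n:ℝ) * C) :=
                Real.sqrt_sq (by positivity)
        rw [Real.sqrt_sq hs₁, hnC] at hadd
        exact hadd
      refine (div_le_div_iff_of_pos_right hn0).mpr ?_
      have : (∫ ω, S (n+1) ω ∂ℙ) - s₁ ≤ s₁ + Real.sqrt n * Real.sqrt C := by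
        have := hb.trans hsplit
        linarith
      nlinarith
  have hfinal : Tendsto
      (fun n : ℕ => (1 - αc * αd) * m + αd * ((∫ ω, S (n+1) ω ∂ℙ) - s₁) / n)
      atTop (𝓝 ((1 - αc * αd) * m)) := by
    simpa using tendsto_const_nhds.add hmid
  refine hfinal.congr' ?_
  filter_upwards [eventually_ge_atTop 1] with n hn
  exact (key n hn).symm
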